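/- arXiv:2202.10626 — 2 statements merged into one kernel-verified Lean document; each statement's English description precedes it below -/
import Mathlib

section
/- Let G be a group and ν(G) Rocco's construction on G. Then in ν(G) one has [[g₁, g₂^φ], [h₁, h₂^φ]] = [[g₁, g₂], [h₁, h₂^φ]] for all g₁, g₂, h₁, h₂ ∈ G. -/
/-- The paper's commutator convention: `[x, y] = x⁻¹ * y⁻¹ * x * y`. -/
def cm {G : Type*} [Group G] (x y : G) : G := x⁻¹ * y⁻¹ * x * y

/-- Conjugation convention: `x ^ y = y⁻¹ * x * y`. -/
def cj {G : Type*} [Group G] (x y : G) : G := y⁻¹ * x * y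

namespace Rocco

variable (G : Type*) [Group G]

/-- The defining relators of Rocco's group `ν(G)`, inside the free product `G ∗ G`
(the second factor playing the role of the isomorphic copy `G^φ`). -/
def rels : Set (Monoid.Coprod G G) :=
  {x | ∃ g₁ g₂ g₃ : G,
    x = cj (cm (Monoid.Coprod.inl g₁) (Monoid.Coprod.inr g₂)) (Monoid.Coprod.inl g₃) *
        (cm (Monoid.Coprod.inl (cj g₁ g₃)) (Monoid.Coprod.inr (cj g₂ g₃)))⁻¹ ∨
    x = cj (cm (Monoid.Coprod.inl g₁) (Monoid.Coprod.inr g₂)) (Monoid.Coprod.inl g₃) *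
        (cj (cm (Monoid.Coprod.inl g₁) (Monoid.Coprod.inr g₂)) (Monoid.Coprod.inr g₃))⁻¹}

/-- Rocco's construction `ν(G)`. -/
abbrev nu := Monoid.Coprod G G ⧸ Subgroup.normalClosure (rels G)

/-- The canonical image of `G` in `ν(G)`. -/
def ν₁ : G →* nu G := (QuotientGroup.mk' (Subgroup.normalClosure (rels G))).comp Monoid.Coprod.inl

/-- The canonical image of the copy `G^φ` in `ν(G)`; `ν₂ g` plays the role of `g^φ`. -/
def ν₂ : G →* nu G := (QuotientGroup.mk' (Subgroup.normalClosure (rels G))).comp Monoid.Coprod.inr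

end Rocco

section Helpers

variable {M N : Type*} [Group M] [Group N]

lemma map_cm (f : M →* N) (x y : M) : f (cm x y) = cm (f x) (f y) := by
  simp [cm, map_mul, map_inv]

lemma map_cj (f : M →* N) (x y : M) : f (cj x y) = cj (f x) (f y) := by
  simp [cj, map_mul, map_inv]

lemma cj_mul (x a b : M) : cj x (a * b) = cj (cj x a) b := by
  simp [cj, mul_assoc]

lemma cm_eq_cj (x k : M) : cm x k = (cj k x)⁻¹ * k := by
  simp [cm, cj, mul_assoc]

end Helpers

namespace Rocco

variable {G : Type*} [Group G]

lemma rel1 (g₁ g₂ g₃ : G) :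
    cj (cm (ν₁ G g₁) (ν₂ G g₂)) (ν₁ G g₃) = cm (ν₁ G (cj g₁ g₃)) (ν₂ G (cj g₂ g₃)) := by
  have h : ((QuotientGroup.mk' (Subgroup.normalClosure (rels G)))
      (cj (cm (Monoid.Coprod.inl g₁) (Monoid.Coprod.inr g₂)) (Monoid.Coprod.inl g₃) *
        (cm (Monoid.Coprod.inl (cj g₁ g₃)) (Monoid.Coprod.inr (cj g₂ g₃)))⁻¹)) = 1 := by
    rw [QuotientGroup.mk'_apply, QuotientGroup.eq_one_iff]
    exact Subgroup.subset_normalClosure ⟨g₁, g₂, g₃, Or.inl rfl⟩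
  rw [map_mul, map_inv, mul_inv_eq_one, map_cj, map_cm, map_cm] at h
  simpa [ν₁, ν₂] using h

lemma rel2 (g₁ g₂ g₃ : G) :
    cj (cm (ν₁ G g₁) (ν₂ G g₂)) (ν₁ G g₃) = cj (cm (ν₁ G g₁) (ν₂ G g₂)) (ν₂ G g₃) := by
  have h : ((QuotientGroup.mk' (Subgroup.normalClosure (rels G)))
      (cj (cm (Monoid.Coprod.inl g₁) (Monoid.Coprod.inr g₂)) (Monoid.Coprod.inl g₃) *
        (cj (cm (Monoid.Coprod.inl g₁) (Monoid.Coprod.inr g₂)) (Monoid.Coprod.inr g₃))⁻¹)) = 1 := by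
    rw [QuotientGroup.mk'_apply, QuotientGroup.eq_one_iff]
    exact Subgroup.subset_normalClosure ⟨g₁, g₂, g₃, Or.inr rfl⟩
  rw [map_mul, map_inv, mul_inv_eq_one, map_cj, map_cj, map_cm] at h
  simpa [ν₁, ν₂] using h

/-- Conjugating a basic commutator by `ν₂ w` is the same as conjugating by `ν₁ w`. -/
lemma conj_word (a b w : G) :
    cj (cm (ν₁ G a) (ν₂ G b)) (ν₂ G w) = cm (ν₁ G (cj a w)) (ν₂ G (cj b w)) := by
  rw [← rel2, rel1]

end Rocco

open Rocco in
theorem comm_comm_phi_eq {G : Type*} [Group G] (g₁ g₂ h₁ h₂ : G) :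
    cm (cm (ν₁ G g₁) (ν₂ G g₂)) (cm (ν₁ G h₁) (ν₂ G h₂)) =
      cm (ν₁ G (cm g₁ g₂)) (cm (ν₁ G h₁) (ν₂ G h₂)) := by
  rw [cm_eq_cj (cm (ν₁ G g₁) (ν₂ G g₂)) (cm (ν₁ G h₁) (ν₂ G h₂)),
    cm_eq_cj (ν₁ G (cm g₁ g₂)) (cm (ν₁ G h₁) (ν₂ G h₂))]
  suffices h : cj (cm (ν₁ G h₁) (ν₂ G h₂)) (cm (ν₁ G g₁) (ν₂ G g₂)) =
      cj (cm (ν₁ G h₁) (ν₂ G h₂)) (ν₁ G (cm g₁ g₂)) by rw [h]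
  calc cj (cm (ν₁ G h₁) (ν₂ G h₂)) (cm (ν₁ G g₁) (ν₂ G g₂))
      = cj (cj (cj (cj (cm (ν₁ G h₁) (ν₂ G h₂)) (ν₁ G g₁⁻¹)) (ν₂ G g₂⁻¹)) (ν₁ G g₁))
          (ν₂ G g₂) := by
        rw [show cm (ν₁ G g₁) (ν₂ G g₂)
            = ν₁ G g₁⁻¹ * ν₂ G g₂⁻¹ * ν₁ G g₁ * ν₂ G g₂ by simp [cm],
          cj_mul, cj_mul, cj_mul]
    _ = cm (ν₁ G (cj (cj (cj (cj h₁ g₁⁻¹) g₂⁻¹) g₁) g₂))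
          (ν₂ G (cj (cj (cj (cj h₂ g₁⁻¹) g₂⁻¹) g₁) g₂)) := by
        rw [rel1, conj_word, rel1, conj_word]
    _ = cj (cm (ν₁ G h₁) (ν₂ G h₂)) (ν₁ G (cm g₁ g₂)) := by
        rw [rel1]
        congr 2 <;> simp [cj, cm, mul_assoc]
end

section
/- Let p be an odd prime and let G be a finite p-group of maximal class of order p^n with 4 ≤ n ≤ p+1 and exponent p², with standard generators s₀, s₁, s_i = [s_{i−1}, s₀]. Then in ν(G), for every 2 ≤ i ≤ n−1 and 0 ≤ j ≤ n−1, every basic commutator in the two elements {s_i, [s_i, s_j^φ]} of weight at least p and of weight at least one in each of s_i and [s_i, s_j^φ] is trivial. -/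
open scoped commutatorElement
section Helpers
variable {H : Type*} [Group H] {K : Type*} [Group K]

lemma map_cm_s19 (φ : H →* K) (x y : H) : φ (cm x y) = cm (φ x) (φ y) := by simp [cm]
lemma map_cj_s19 (φ : H →* K) (x y : H) : φ (cj x y) = cj (φ x) (φ y) := by simp [cj]
lemma cm_eq_commutator (x y : H) : cm x y = ⁅x⁻¹, y⁻¹⁆ := by
  simp only [cm, commutatorElement_def]; group
lemma cm_mem_commutator {H₁ H₂ : Subgroup H} {x y : H} (hx : x ∈ H₁) (hy : y ∈ H₂) :
    cm x y ∈ ⁅H₁, H₂⁆ :=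
  cm_eq_commutator x y ▸ Subgroup.commutator_mem_commutator (inv_mem hx) (inv_mem hy)
lemma cm_one_right (x : H) : cm x 1 = 1 := by simp [cm]
lemma cm_one_left (x : H) : cm 1 x = 1 := by simp [cm]
lemma cj_one_left (w : H) : cj 1 w = 1 := by simp [cj]
lemma cj_mul_s19 (x y w : H) : cj (x * y) w = cj x w * cj y w := by simp [cj]; group
lemma cj_inv (x w : H) : cj x⁻¹ w = (cj x w)⁻¹ := by simp [cj]; group
lemma cj_cj (x v w : H) : cj (cj x v) w = cj x (v * w) := by simp [cj]; group
lemma cm_eq_inv_mul_cj (x y : H) : cm x y = x⁻¹ * cj x y := by simp [cm, cj]; group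
lemma cj_eq_mul_cm (x y : H) : cj x y = x * cm x y := by simp [cm, cj]; group
lemma commute_of_cm_eq_one {x y : H} (h : cm x y = 1) : Commute x y := by
  rw [cm_eq_commutator] at h
  have := commutatorElement_eq_one_iff_commute.mp h
  simpa using this.inv_inv
end Helpers

lemma three_subgroups {H : Type*} [Group H] {A B C N : Subgroup H} [N.Normal]
    (h1 : ⁅⁅B, C⁆, A⁆ ≤ N) (h2 : ⁅⁅C, A⁆, B⁆ ≤ N) : ⁅⁅A, B⁆, C⁆ ≤ N := by
  have key : ∀ {X Y Z : Subgroup H}, ⁅⁅X, Y⁆, Z⁆ ≤ N ↔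
      ⁅⁅X.map (QuotientGroup.mk' N), Y.map (QuotientGroup.mk' N)⁆,
        Z.map (QuotientGroup.mk' N)⁆ = ⊥ := by
    intro X Y Z
    rw [← Subgroup.map_commutator, ← Subgroup.map_commutator, Subgroup.map_eq_bot_iff,
      QuotientGroup.ker_mk']
  rw [key]
  exact Subgroup.commutator_commutator_eq_bot_of_rotate (key.mp h1) (key.mp h2)

lemma lcs_succ_eq {H : Type*} [Group H] (n : ℕ) :
    (⊤ : Subgroup H).lowerCentralSeries (n + 1) = ⁅(⊤ : Subgroup H).lowerCentralSeries n, ⊤⁆ := rfl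

lemma lcs_comm {H : Type*} [Group H] :
    ∀ b a, ⁅(⊤ : Subgroup H).lowerCentralSeries a, (⊤ : Subgroup H).lowerCentralSeries b⁆ ≤ (⊤ : Subgroup H).lowerCentralSeries (a + b + 1)
  | 0, a => by
    rw [lowerCentralSeries_zero, ← lcs_succ_eq]
  | (b + 1), a => by
    rw [lcs_succ_eq, Subgroup.commutator_comm]
    apply three_subgroups
    · have h1 : ⁅(⊤ : Subgroup H), (⊤ : Subgroup H).lowerCentralSeries a⁆ = (⊤ : Subgroup H).lowerCentralSeries (a + 1) :=
        (Subgroup.commutator_comm _ _).trans (lcs_succ_eq a).symm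
      rw [h1]
      have := lcs_comm (H := H) b (a + 1)
      have e : a + 1 + b + 1 = a + (b + 1) + 1 := by omega
      rwa [e] at this
    · calc ⁅⁅(⊤ : Subgroup H).lowerCentralSeries a, (⊤ : Subgroup H).lowerCentralSeries b⁆, ⊤⁆
          ≤ ⁅(⊤ : Subgroup H).lowerCentralSeries (a + b + 1), ⊤⁆ :=
            Subgroup.commutator_mono (lcs_comm (H := H) b a) le_rfl
        _ = (⊤ : Subgroup H).lowerCentralSeries (a + b + 1 + 1) := (lcs_succ_eq _).symm
        _ = (⊤ : Subgroup H).lowerCentralSeries (a + (b + 1) + 1) := by ring_nf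

namespace Rocco

variable (G : Type*) [Group G]

/-- `[g, h^φ]` in `ν(G)`. -/
def tf (g h : G) : nu G := cm (ν₁ G g) (ν₂ G h)

/-- The retraction `ν(G) → G` sending both copies identically to `G`. -/
def rho : nu G →* G :=
  QuotientGroup.lift _ (Monoid.Coprod.lift (MonoidHom.id G) (MonoidHom.id G)) (by
    intro x hx
    refine Subgroup.normalClosure_le_normal ?_ hx
    rintro y ⟨g₁, g₂, g₃, (rfl | rfl)⟩ <;>
      simp only [SetLike.mem_coe, MonoidHom.mem_ker, map_mul, map_inv, map_cm_s19, map_cj_s19,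
        Monoid.Coprod.lift_apply_inl, Monoid.Coprod.lift_apply_inr, MonoidHom.id_apply] <;>
      · simp only [cm, cj]; group)

@[simp] lemma rho_nu1 (g : G) : rho G (ν₁ G g) = g := rfl
@[simp] lemma rho_nu2 (g : G) : rho G (ν₂ G g) = g := rfl

lemma nu1_mk (g : G) :
    QuotientGroup.mk' (Subgroup.normalClosure (rels G)) (Monoid.Coprod.inl g) = ν₁ G g := rfl
lemma nu2_mk (g : G) :
    QuotientGroup.mk' (Subgroup.normalClosure (rels G)) (Monoid.Coprod.inr g) = ν₂ G g := rfl

lemma rel₁ (g h k : G) : cj (tf G g h) (ν₁ G k) = tf G (cj g k) (cj h k) := by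
  have hm : (cj (cm (Monoid.Coprod.inl g) (Monoid.Coprod.inr h)) (Monoid.Coprod.inl k) *
      (cm (Monoid.Coprod.inl (cj g k)) (Monoid.Coprod.inr (cj h k)))⁻¹ : Monoid.Coprod G G) ∈
      Subgroup.normalClosure (rels G) :=
    Subgroup.subset_normalClosure ⟨g, h, k, Or.inl rfl⟩
  have h2 := (QuotientGroup.eq_one_iff _).mpr hm
  rw [← mul_inv_eq_one]
  calc cj (tf G g h) (ν₁ G k) * (tf G (cj g k) (cj h k))⁻¹
      = QuotientGroup.mk' (Subgroup.normalClosure (rels G))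
        (cj (cm (Monoid.Coprod.inl g) (Monoid.Coprod.inr h)) (Monoid.Coprod.inl k) *
          (cm (Monoid.Coprod.inl (cj g k)) (Monoid.Coprod.inr (cj h k)))⁻¹) := by
        simp only [map_mul, map_inv, map_cm_s19, map_cj_s19, nu1_mk, nu2_mk, tf]
    _ = 1 := h2

lemma rel₂ (g h k : G) : cj (tf G g h) (ν₂ G k) = cj (tf G g h) (ν₁ G k) := by
  have hm : (cj (cm (Monoid.Coprod.inl g) (Monoid.Coprod.inr h)) (Monoid.Coprod.inl k) *
      (cj (cm (Monoid.Coprod.inl g) (Monoid.Coprod.inr h)) (Monoid.Coprod.inr k))⁻¹ :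
        Monoid.Coprod G G) ∈ Subgroup.normalClosure (rels G) :=
    Subgroup.subset_normalClosure ⟨g, h, k, Or.inr rfl⟩
  have h2 := (QuotientGroup.eq_one_iff _).mpr hm
  rw [eq_comm, ← mul_inv_eq_one]
  calc cj (tf G g h) (ν₁ G k) * (cj (tf G g h) (ν₂ G k))⁻¹
      = QuotientGroup.mk' (Subgroup.normalClosure (rels G))
        (cj (cm (Monoid.Coprod.inl g) (Monoid.Coprod.inr h)) (Monoid.Coprod.inl k) *
          (cj (cm (Monoid.Coprod.inl g) (Monoid.Coprod.inr h)) (Monoid.Coprod.inr k))⁻¹) := by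
        simp only [map_mul, map_inv, map_cm_s19, map_cj_s19, nu1_mk, nu2_mk, tf]
    _ = 1 := h2

/-- Conjugation of `[g, h^φ]` by an arbitrary element of `ν(G)` acts diagonally via `rho`. -/
lemma conj_tf (w : nu G) (g h : G) :
    cj (tf G g h) w = tf G (cj g (rho G w)) (cj h (rho G w)) := by
  obtain ⟨w', rfl⟩ := QuotientGroup.mk'_surjective _ w
  refine Monoid.Coprod.induction_on
    (motive := fun w' => ∀ g h : G, cj (tf G g h)
        (QuotientGroup.mk' (Subgroup.normalClosure (rels G)) w') =
      tf G (cj g (rho G (QuotientGroup.mk' (Subgroup.normalClosure (rels G)) w')))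
        (cj h (rho G (QuotientGroup.mk' (Subgroup.normalClosure (rels G)) w')))) w'
    ?_ ?_ ?_ g h
  · intro m g h; rw [nu1_mk, rel₁, rho_nu1]
  · intro m g h; rw [nu2_mk, rel₂, rel₁, rho_nu2]
  · intro x y ihx ihy g h
    rw [map_mul, ← cj_cj, ihx, ihy, cj_cj, cj_cj, ← map_mul, ← map_mul]

end Rocco

/-- The first two-step centralizer `P₁(G) = C_G(P₂(G)/P₄(G))`: the preimage in `G` of the
centralizer of the image of `γ₂(G)` in `G/γ₄(G)`.  (Recall `γ_i(G) = (⊤ : Subgroup G).lowerCentralSeries (i-1)`.) -/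
def Pone (G : Type*) [Group G] : Subgroup G :=
  Subgroup.comap (QuotientGroup.mk' ((⊤ : Subgroup G).lowerCentralSeries 3))
    (Subgroup.centralizer
      (((⊤ : Subgroup G).lowerCentralSeries 1).map (QuotientGroup.mk' ((⊤ : Subgroup G).lowerCentralSeries 3)) : Set _))

/-- The series `P₀(G) = G`, `P₁(G) = C_G(P₂(G)/P₄(G))`, and `P_i(G) = γ_i(G)` for `i ≥ 2`. -/
def Pser (G : Type*) [Group G] : ℕ → Subgroup G
  | 0 => ⊤
  | 1 => Pone G
  | (i + 2) => (⊤ : Subgroup G).lowerCentralSeries (i + 1)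

open Rocco in
/-- The subgroup `[P_i(G), G^φ]` of `ν(G)`. -/
def Pcomm (G : Type*) [Group G] (i : ℕ) : Subgroup (nu G) :=
  Subgroup.closure {x | ∃ a ∈ Pser G i, ∃ b : G, x = cm (ν₁ G a) (ν₂ G b)}

/-- Formal commutator words on a two-letter alphabet `{x, y}`. -/
inductive CommWord : Type
  | x : CommWord
  | y : CommWord
  | comm : CommWord → CommWord → CommWord

namespace CommWord

/-- Total weight. -/
def wt : CommWord → ℕ
  | x => 1
  | y => 1
  | comm a b => wt a + wt b

/-- Weight in the letter `x`. -/
def wtx : CommWord → ℕ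
  | x => 1
  | y => 0
  | comm a b => wtx a + wtx b

/-- Weight in the letter `y`. -/
def wty : CommWord → ℕ
  | x => 0
  | y => 1
  | comm a b => wty a + wty b

/-- An injective encoding, used to fix a linear order on commutator words. -/
def enc : CommWord → ℕ
  | x => 0
  | y => 1
  | comm a b => Nat.pair (enc a) (enc b) + 2

/-- The fixed linear order on commutator words used to define basic commutators:
first by weight, then by the encoding.  (Weight-one words satisfy `x < y`.) -/
def lt (a b : CommWord) : Prop := wt a < wt b ∨ (wt a = wt b ∧ enc a < enc b)

/-- Hall basic commutators on `{x, y}` with respect to the above order: the letters `x, y` are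
basic, and `[u, v]` is basic iff `u, v` are basic, `v < u`, and if `u = [u₁, u₂]` then `u₂ ≤ v`. -/
inductive IsBasic : CommWord → Prop
  | x : IsBasic x
  | y : IsBasic y
  | comm {u v : CommWord} : IsBasic u → IsBasic v → lt v u →
      (∀ u₁ u₂, u = comm u₁ u₂ → ¬ lt v u₂) → IsBasic (comm u v)

/-- Evaluation of a formal commutator word at elements `a, b` of a group,
with `[g, h] = g⁻¹h⁻¹gh`. -/
def eval {H : Type*} [Group H] (a b : H) : CommWord → H
  | x => a
  | y => b
  | comm u v => cm (eval a b u) (eval a b v)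

end CommWord


namespace Rocco

variable (G : Type*) [Group G]

/-- Generators `[g, h^φ]` with `g ∈ γ_{a+1}(G)`, `h ∈ γ_{b+1}(G)`, `a + b + 1 ≥ m`. -/
def Wset (m : ℕ) : Set (nu G) :=
  {x | ∃ a b g h, g ∈ (⊤ : Subgroup G).lowerCentralSeries a ∧ h ∈ (⊤ : Subgroup G).lowerCentralSeries b ∧
    m ≤ a + b + 1 ∧ x = tf G g h}

def Vsub (m : ℕ) : Subgroup (nu G) := Subgroup.closure (Wset G m)

def Bsub (m : ℕ) : Subgroup (nu G) :=
  Subgroup.closure ((ν₁ G) '' ((⊤ : Subgroup G).lowerCentralSeries m) ∪ (ν₂ G) '' ((⊤ : Subgroup G).lowerCentralSeries m)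
    ∪ Wset G m)

lemma cj_mem_lcs {a : ℕ} {g : G} (hg : g ∈ (⊤ : Subgroup G).lowerCentralSeries a) (k : G) :
    cj g k ∈ (⊤ : Subgroup G).lowerCentralSeries a := by
  have := (Subgroup.lowerCentralSeries_normal (⊤ : Subgroup G) a).conj_mem g hg k⁻¹
  simpa [cj, mul_assoc] using this

lemma Wset_cj {m : ℕ} {x : nu G} (hx : x ∈ Wset G m) (w : nu G) : cj x w ∈ Wset G m := by
  obtain ⟨a, b, g, h, hg, hh, hm, rfl⟩ := hx
  rw [conj_tf]
  exact ⟨a, b, _, _, cj_mem_lcs G hg _, cj_mem_lcs G hh _, hm, rfl⟩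

lemma Vsub_cj {m : ℕ} {x : nu G} (hx : x ∈ Vsub G m) (w : nu G) : cj x w ∈ Vsub G m := by
  refine Subgroup.closure_induction (p := fun y _ => ∀ u : nu G, cj y u ∈ Vsub G m)
    ?_ ?_ ?_ ?_ hx w
  · intro y hy u; exact Subgroup.subset_closure (Wset_cj G hy u)
  · intro u; rw [cj_one_left]; exact one_mem _
  · intro y z _ _ ihy ihz u; rw [cj_mul_s19]; exact mul_mem (ihy u) (ihz u)
  · intro y _ ih u; rw [cj_inv]; exact inv_mem (ih u)

lemma Vsub_normal (m : ℕ) : (Vsub G m).Normal := by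
  constructor
  intro x hx w
  have e : w * x * w⁻¹ = cj x w⁻¹ := by simp only [cj, inv_inv]
  rw [e]
  exact Vsub_cj G hx w⁻¹

lemma Vsub_mono {m m' : ℕ} (h : m ≤ m') : Vsub G m' ≤ Vsub G m :=
  Subgroup.closure_mono (fun x ⟨a, b, g, k, hg, hk, hm, hx⟩ => ⟨a, b, g, k, hg, hk, h.trans hm, hx⟩)

lemma Vsub_le_Bsub {m m' : ℕ} (h : m ≤ m') : Vsub G m' ≤ Bsub G m :=
  le_trans (Vsub_mono G h) (Subgroup.closure_mono (Set.subset_union_right))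

/-- The key commutator estimate: `[[g, h^φ], k]` with `k ∈ γ_{q+1}(G)` lands in the part of
`[G, G^φ]` of total weight `(a+1) + (b+1) + (q+1)`. -/
lemma key {D : ℕ} (hD : (⊤ : Subgroup G).lowerCentralSeries D = ⊥) :
    ∀ t q, D ≤ q + t → ∀ k ∈ (⊤ : Subgroup G).lowerCentralSeries q, ∀ a b g h,
      g ∈ (⊤ : Subgroup G).lowerCentralSeries a → h ∈ (⊤ : Subgroup G).lowerCentralSeries b →
      cm (tf G g h) (ν₁ G k) ∈ Vsub G (a + b + q + 2) := by
  intro t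
  induction t with
  | zero =>
    intro q hq k hk a b g h _ _
    have hk1 : k = 1 := by
      have hle : (⊤ : Subgroup G).lowerCentralSeries q ≤ ⊥ := hD ▸ lowerCentralSeries_antitone _ (by omega)
      simpa [Subgroup.mem_bot] using hle hk
    subst hk1
    rw [map_one, cm_one_right]
    exact one_mem _
  | succ t ih =>
    intro q hq k hk a b g h hg hh
    have hu : cm g k ∈ (⊤ : Subgroup G).lowerCentralSeries (a + q + 1) :=
      lcs_comm q a (cm_mem_commutator hg hk)
    have hv : cm h k ∈ (⊤ : Subgroup G).lowerCentralSeries (b + q + 1) :=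
      lcs_comm q b (cm_mem_commutator hh hk)
    have hu' : cm g k ∈ (⊤ : Subgroup G).lowerCentralSeries (q + 1) :=
      lowerCentralSeries_antitone _ (by omega) hu
    have hv' : cm h k ∈ (⊤ : Subgroup G).lowerCentralSeries (q + 1) :=
      lowerCentralSeries_antitone _ (by omega) hv
    set u := cm g k with hu_def
    set v := cm h k with hv_def
    have main : cm (tf G g h) (ν₁ G k) =
        (tf G g h)⁻¹ * cj (tf G g v) (ν₁ G u) * (tf G g h) *
          cm (tf G g h) (ν₁ G u) * cj (cm (tf G g h) (ν₁ G v)) (ν₁ G u) * tf G u (h * v) := by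
      have h1 : cj (tf G g h) (ν₁ G k) = tf G (g * u) (h * v) := by
        rw [rel₁, ← cj_eq_mul_cm, ← cj_eq_mul_cm]
      have h2 : tf G (g * u) (h * v) =
          cj (tf G g v * cj (tf G g h) (ν₂ G v)) (ν₁ G u) * tf G u (h * v) := by
        simp only [tf, map_mul, cm, cj]; group
      rw [cm_eq_inv_mul_cj, h1, h2, rel₂]
      simp only [tf, map_mul, cm, cj]; group
    rw [main]
    have m1 : cj (tf G g v) (ν₁ G u) ∈ Vsub G (a + b + q + 2) :=
      Subgroup.subset_closure (Wset_cj G ⟨a, b + q + 1, g, v, hg, hv, by omega, rfl⟩ _)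
    have m2 : (tf G g h)⁻¹ * cj (tf G g v) (ν₁ G u) * (tf G g h) ∈ Vsub G (a + b + q + 2) := by
      have := (Vsub_normal G (a + b + q + 2)).conj_mem _ m1 (tf G g h)⁻¹
      simpa [mul_assoc] using this
    have m3 : cm (tf G g h) (ν₁ G u) ∈ Vsub G (a + b + q + 2) :=
      Vsub_mono G (by omega) (ih (q + 1) (by omega) u hu' a b g h hg hh)
    have m4 : cj (cm (tf G g h) (ν₁ G v)) (ν₁ G u) ∈ Vsub G (a + b + q + 2) :=
      Vsub_cj G (Vsub_mono G (by omega) (ih (q + 1) (by omega) v hv' a b g h hg hh)) _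
    have m5 : tf G u (h * v) ∈ Vsub G (a + b + q + 2) :=
      Subgroup.subset_closure
        ⟨a + q + 1, b, u, h * v, hu,
          mul_mem hh (lowerCentralSeries_antitone _ (by omega) hv), by omega, rfl⟩
    exact mul_mem (mul_mem (mul_mem m2 m3) m4) m5

end Rocco


namespace Rocco

variable (G : Type*) [Group G]

lemma cm_swap {H : Type*} [Group H] (x y : H) : cm y x = (cm x y)⁻¹ := by
  simp only [cm]; group

lemma Bsub_cj_gen (m : ℕ) : ∀ n ∈ Bsub G m, ∀ x : G,
    cj n (ν₁ G x) ∈ Bsub G m ∧ cj n (ν₂ G x) ∈ Bsub G m := by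
  intro n hn
  refine Subgroup.closure_induction
    (p := fun y _ => ∀ x : G, cj y (ν₁ G x) ∈ Bsub G m ∧ cj y (ν₂ G x) ∈ Bsub G m) ?_ ?_ ?_ ?_ hn
  · rintro y ((⟨a, ha, rfl⟩ | ⟨a, ha, rfl⟩) | hy) x
    · constructor
      · rw [← map_cj_s19]
        exact Subgroup.subset_closure (Or.inl (Or.inl ⟨cj a x, cj_mem_lcs G ha x, rfl⟩))
      · rw [cj_eq_mul_cm]
        exact mul_mem (Subgroup.subset_closure (Or.inl (Or.inl ⟨a, ha, rfl⟩)))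
          (Subgroup.subset_closure (Or.inr ⟨m, 0, a, x, ha, Subgroup.mem_top x, by omega, rfl⟩))
    · constructor
      · rw [cj_eq_mul_cm, cm_swap]
        exact mul_mem (Subgroup.subset_closure (Or.inl (Or.inr ⟨a, ha, rfl⟩)))
          (inv_mem (Subgroup.subset_closure
            (Or.inr ⟨0, m, x, a, Subgroup.mem_top x, ha, by omega, rfl⟩)))
      · rw [← map_cj_s19]
        exact Subgroup.subset_closure (Or.inl (Or.inr ⟨cj a x, cj_mem_lcs G ha x, rfl⟩))
    · exact ⟨Subgroup.subset_closure (Or.inr (Wset_cj G hy _)),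
        Subgroup.subset_closure (Or.inr (Wset_cj G hy _))⟩
  · intro x; rw [cj_one_left, cj_one_left]; exact ⟨one_mem _, one_mem _⟩
  · intro y z _ _ ihy ihz x
    rw [cj_mul_s19, cj_mul_s19]
    exact ⟨mul_mem (ihy x).1 (ihz x).1, mul_mem (ihy x).2 (ihz x).2⟩
  · intro y _ ih x
    rw [cj_inv, cj_inv]
    exact ⟨inv_mem (ih x).1, inv_mem (ih x).2⟩

lemma Bsub_cj (m : ℕ) {n : nu G} (hn : n ∈ Bsub G m) (w : nu G) : cj n w ∈ Bsub G m := by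
  obtain ⟨w', rfl⟩ := QuotientGroup.mk'_surjective _ w
  refine Monoid.Coprod.induction_on
    (motive := fun w' => ∀ n ∈ Bsub G m,
      cj n (QuotientGroup.mk' (Subgroup.normalClosure (rels G)) w') ∈ Bsub G m) w'
    ?_ ?_ ?_ n hn
  · intro a n hn; rw [nu1_mk]; exact (Bsub_cj_gen G m n hn a).1
  · intro a n hn; rw [nu2_mk]; exact (Bsub_cj_gen G m n hn a).2
  · intro x y ihx ihy n hn
    rw [map_mul, ← cj_cj]
    exact ihy _ (ihx _ hn)

lemma Bsub_normal (m : ℕ) : (Bsub G m).Normal := by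
  constructor
  intro x hx w
  have e : w * x * w⁻¹ = cj x w⁻¹ := by simp only [cj, inv_inv]
  rw [e]
  exact Bsub_cj G m hx w⁻¹

lemma Bsub_zero : Bsub G 0 = ⊤ := by
  refine le_antisymm le_top ?_
  intro x _
  obtain ⟨w', rfl⟩ := QuotientGroup.mk'_surjective _ x
  refine Monoid.Coprod.induction_on
    (motive := fun w' => QuotientGroup.mk' (Subgroup.normalClosure (rels G)) w' ∈ Bsub G 0) w'
    ?_ ?_ ?_
  · intro a; exact Subgroup.subset_closure (Or.inl (Or.inl ⟨a, Subgroup.mem_top a, rfl⟩))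
  · intro a; exact Subgroup.subset_closure (Or.inl (Or.inr ⟨a, Subgroup.mem_top a, rfl⟩))
  · intro x y ihx ihy; rw [map_mul]; exact mul_mem ihx ihy

lemma gen_comm (m : ℕ) {D : ℕ} (hD : (⊤ : Subgroup G).lowerCentralSeries D = ⊥) :
    ∀ p ∈ ((ν₁ G) '' ((⊤ : Subgroup G).lowerCentralSeries m) ∪ (ν₂ G) '' ((⊤ : Subgroup G).lowerCentralSeries m)
      ∪ Wset G m), ∀ x : G,
      cm p (ν₁ G x) ∈ Bsub G (m + 1) ∧ cm p (ν₂ G x) ∈ Bsub G (m + 1) := by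
  rintro p ((⟨a, ha, rfl⟩ | ⟨a, ha, rfl⟩) | hp) x
  · have hax : cm a x ∈ (⊤ : Subgroup G).lowerCentralSeries (m + 1) := by
      rw [lcs_succ_eq]
      exact cm_mem_commutator ha (Subgroup.mem_top x)
    constructor
    · rw [← map_cm_s19]
      exact Subgroup.subset_closure (Or.inl (Or.inl ⟨cm a x, hax, rfl⟩))
    · exact Subgroup.subset_closure (Or.inr ⟨m, 0, a, x, ha, Subgroup.mem_top x, by omega, rfl⟩)
  · have hax : cm a x ∈ (⊤ : Subgroup G).lowerCentralSeries (m + 1) := by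
      rw [lcs_succ_eq]
      exact cm_mem_commutator ha (Subgroup.mem_top x)
    constructor
    · rw [cm_swap]
      exact inv_mem (Subgroup.subset_closure
        (Or.inr ⟨0, m, x, a, Subgroup.mem_top x, ha, by omega, rfl⟩))
    · rw [← map_cm_s19]
      exact Subgroup.subset_closure (Or.inl (Or.inr ⟨cm a x, hax, rfl⟩))
  · obtain ⟨a, b, g, h, hg, hh, hm, rfl⟩ := hp
    have h1 : cm (tf G g h) (ν₁ G x) ∈ Bsub G (m + 1) :=
      Vsub_le_Bsub G (le_refl _) (Vsub_mono G (by omega)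
        (key G hD D 0 (by omega) x (Subgroup.mem_top x) a b g h hg hh))
    refine ⟨h1, ?_⟩
    rw [cm_eq_inv_mul_cj, rel₂, ← cm_eq_inv_mul_cj]
    exact h1

lemma lcs_nu_le {D : ℕ} (hD : (⊤ : Subgroup G).lowerCentralSeries D = ⊥) :
    ∀ m, (⊤ : Subgroup (nu G)).lowerCentralSeries m ≤ Bsub G m := by
  intro m
  induction m with
  | zero => rw [lowerCentralSeries_zero, Bsub_zero]
  | succ m ih =>
    letI : (Bsub G (m + 1)).Normal := Bsub_normal G (m + 1)
    set π := QuotientGroup.mk' (Bsub G (m + 1)) with hπ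
    have hcen : ∀ p ∈ Bsub G m, ∀ w : nu G, Commute (π p) (π w) := by
      intro p hp
      refine Subgroup.closure_induction
        (p := fun p _ => ∀ w : nu G, Commute (π p) (π w)) ?_ ?_ ?_ ?_ hp
      · intro p hpgen w
        obtain ⟨w', rfl⟩ := QuotientGroup.mk'_surjective _ w
        refine Monoid.Coprod.induction_on
          (motive := fun w' => Commute (π p)
            (π (QuotientGroup.mk' (Subgroup.normalClosure (rels G)) w'))) w' ?_ ?_ ?_
        · intro a
          refine commute_of_cm_eq_one ?_
          rw [← map_cm_s19, nu1_mk]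
          exact (QuotientGroup.eq_one_iff _).mpr (gen_comm G m hD p hpgen a).1
        · intro a
          refine commute_of_cm_eq_one ?_
          rw [← map_cm_s19, nu2_mk]
          exact (QuotientGroup.eq_one_iff _).mpr (gen_comm G m hD p hpgen a).2
        · intro x y ihx ihy
          rw [map_mul, map_mul]
          exact ihx.mul_right ihy
      · intro w; rw [map_one]; exact Commute.one_left _
      · intro y z _ _ ihy ihz w
        rw [map_mul]; exact (ihy w).mul_left (ihz w)
      · intro y _ ih w
        rw [map_inv]; exact (ih w).inv_left
    have hstep : ∀ p ∈ Bsub G m, ∀ w : nu G, ⁅p, w⁆ ∈ Bsub G (m + 1) := by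
      intro p hp w
      have h1 : π ⁅p, w⁆ = 1 := by
        rw [map_commutatorElement]
        exact commutatorElement_eq_one_iff_commute.mpr (hcen p hp w)
      rwa [← QuotientGroup.ker_mk' (Bsub G (m + 1)), MonoidHom.mem_ker]
    rw [lcs_succ_eq]
    refine Subgroup.commutator_le.mpr ?_
    intro p hp w _
    exact hstep p (ih hp) w

lemma Bsub_eq_bot {D m : ℕ} (hD : (⊤ : Subgroup G).lowerCentralSeries D = ⊥) (hm : 2 * D ≤ m) (h1 : 1 ≤ D) :
    Bsub G m = ⊥ := by
  refine le_antisymm ?_ bot_le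
  refine (Subgroup.closure_le _).mpr ?_
  rintro p ((⟨a, ha, rfl⟩ | ⟨a, ha, rfl⟩) | ⟨a, b, g, h, hg, hh, hsum, rfl⟩)
  · have : a = 1 := by
      have hle : (⊤ : Subgroup G).lowerCentralSeries m ≤ ⊥ := hD ▸ lowerCentralSeries_antitone _ (by omega)
      simpa [Subgroup.mem_bot] using hle ha
    simp [this, Subgroup.mem_bot]
  · have : a = 1 := by
      have hle : (⊤ : Subgroup G).lowerCentralSeries m ≤ ⊥ := hD ▸ lowerCentralSeries_antitone _ (by omega)
      simpa [Subgroup.mem_bot] using hle ha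
    simp [this, Subgroup.mem_bot]
  · rcases le_or_gt D a with hDa | hDa
    · have : g = 1 := by
        have hle : (⊤ : Subgroup G).lowerCentralSeries a ≤ ⊥ := hD ▸ lowerCentralSeries_antitone _ hDa
        simpa [Subgroup.mem_bot] using hle hg
      simp [this, tf, map_one, cm_one_left, Subgroup.mem_bot]
    · have : h = 1 := by
        have hle : (⊤ : Subgroup G).lowerCentralSeries b ≤ ⊥ := hD ▸ lowerCentralSeries_antitone _ (by omega)
        simpa [Subgroup.mem_bot] using hle hh
      simp [this, tf, map_one, cm_one_right, Subgroup.mem_bot]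

end Rocco

open Rocco in
/-- For `G` of maximal class, order `p^n` (`p` odd, `4 ≤ n ≤ p+1`) and exponent `p²`, with
standard generators `s_i`, every basic commutator in the two letters `{s_i, [s_i, s_j^φ]}`
of weight at least `p` and weight at least one in each letter is trivial in `ν(G)`,
for `2 ≤ i ≤ n-1`, `0 ≤ j ≤ n-1`. -/
theorem basic_commutators_trivial {p n : ℕ} (hp : p.Prime) (hodd : Odd p)
    (G : Type*) [Group G] (hcard : Nat.card G = p ^ n)
    (hn₁ : 4 ≤ n) (hn₂ : n ≤ p + 1) (hexp : Monoid.exponent G = p ^ 2)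
    (hnil : Group.IsNilpotent G) (hclass : Group.nilpotencyClass G = n - 1)
    (s : ℕ → G)
    (hs0 : s 0 ∉ Pone G)
    (hs0c : s 0 ∉ Subgroup.centralizer ((⊤ : Subgroup G).lowerCentralSeries (n - 3) : Set G))
    (hs1 : s 1 ∈ Pone G) (hs1' : s 1 ∉ (⊤ : Subgroup G).lowerCentralSeries 1)
    (hrec : ∀ i, s (i + 2) = cm (s (i + 1)) (s 0)) :
    ∀ i j, 2 ≤ i → i ≤ n - 1 → j ≤ n - 1 →
      ∀ c : CommWord, c.IsBasic → p ≤ c.wt → 1 ≤ c.wtx → 1 ≤ c.wty →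
        c.eval (ν₁ G (s i)) (cm (ν₁ G (s i)) (ν₂ G (s j))) = 1 := by
  intro i j hi2 _hin _hjn c hbasic hwt hwx hwy
  have hD : (⊤ : Subgroup G).lowerCentralSeries (n - 1) = ⊥ := by
    rw [← hclass]; exact lowerCentralSeries_nilpotencyClass
  -- the first letter lies in γ₂(ν(G))
  have ha : ν₁ G (s i) ∈ (⊤ : Subgroup (nu G)).lowerCentralSeries 1 := by
    obtain ⟨i', rfl⟩ : ∃ i', i = i' + 2 := ⟨i - 2, by omega⟩
    rw [hrec i', map_cm_s19, lcs_succ_eq]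
    exact cm_mem_commutator (Subgroup.mem_top _) (Subgroup.mem_top _)
  -- the second letter lies in γ₃(ν(G))
  have hb : cm (ν₁ G (s i)) (ν₂ G (s j)) ∈ (⊤ : Subgroup (nu G)).lowerCentralSeries 2 := by
    have h12 : ⁅(⊤ : Subgroup (nu G)).lowerCentralSeries 1, (⊤ : Subgroup (nu G)).lowerCentralSeries 0⁆ ≤
        (⊤ : Subgroup (nu G)).lowerCentralSeries 2 := lcs_comm (H := nu G) 0 1
    exact h12 (cm_mem_commutator ha (by rw [lowerCentralSeries_zero]; exact Subgroup.mem_top _))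
  have wt_eq : ∀ c : CommWord, c.wt = c.wtx + c.wty := by
    intro c
    induction c with
    | x => rfl
    | y => rfl
    | comm u v ihu ihv => simp only [CommWord.wt, CommWord.wtx, CommWord.wty, ihu, ihv]; omega
  have wt_pos : ∀ c : CommWord, 1 ≤ c.wt := by
    intro c
    induction c with
    | x => exact le_refl _
    | y => exact le_refl _
    | comm u v ihu ihv => simp only [CommWord.wt]; omega
  -- weighted depth of evaluations in the lower central series of ν(G)
  have ev : ∀ (c : CommWord) (k : ℕ), k + 1 ≤ 2 * c.wtx + 3 * c.wty →
      c.eval (ν₁ G (s i)) (cm (ν₁ G (s i)) (ν₂ G (s j))) ∈ (⊤ : Subgroup (nu G)).lowerCentralSeries k := by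
    intro c
    induction c with
    | x =>
      intro k hk
      simp only [CommWord.wtx, CommWord.wty] at hk
      exact lowerCentralSeries_antitone _ (by omega) ha
    | y =>
      intro k hk
      simp only [CommWord.wtx, CommWord.wty] at hk
      exact lowerCentralSeries_antitone _ (by omega) hb
    | comm u v ihu ihv =>
      intro k hk
      simp only [CommWord.wtx, CommWord.wty] at hk
      have hu1 := wt_pos u; have hv1 := wt_pos v
      have hu2 := wt_eq u; have hv2 := wt_eq v
      have hu := ihu (2 * u.wtx + 3 * u.wty - 1) (by omega)
      have hv := ihv (2 * v.wtx + 3 * v.wty - 1) (by omega)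
      have hm := lcs_comm (H := nu G) (2 * v.wtx + 3 * v.wty - 1) (2 * u.wtx + 3 * u.wty - 1)
        (cm_mem_commutator hu hv)
      exact lowerCentralSeries_antitone _ (by omega) hm
  have harith : 2 * (n - 1) + 1 ≤ 2 * c.wtx + 3 * c.wty := by
    have h1 := wt_eq c
    omega
  have hfin := ev c (2 * (n - 1)) harith
  have hle := Rocco.lcs_nu_le G hD (2 * (n - 1))
  rw [Rocco.Bsub_eq_bot G hD (le_refl _) (by omega)] at hle
  simpa [Subgroup.mem_bot, CommWord.eval] using hle hfin
end
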